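/- Let θ, x, z solve x' = cos θ, z' = sin θ, z > 0, with θ' (s) = ((m−1) cos θ(s) + n)/z(s), initial conditions x(0)=0, z(0)=z₀>0, θ(0)=0. Then for all s in the domain, (n + cos θ(s))·z(s) = (2−m)·∫₀ˢ sin θ(t) cos θ(t) dt + (n+1)·z₀. -/

import Mathlib

open Real intervalIntegral

/-- First integral of the ODE for parabolic surfaces with `κ₁ = m κ₂ + n`:
`(n + cos θ(s)) z(s) = (2-m) ∫₀ˢ sin θ cos θ + (n+1) z₀`. -/
theorem stmt4 (m n z₀ : ℝ) (θ x z θd : ℝ → ℝ)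
    (hx : ∀ s, HasDerivAt x (Real.cos (θ s)) s)
    (hz : ∀ s, HasDerivAt z (Real.sin (θ s)) s)
    (hθ : ∀ s, HasDerivAt θ (θd s) s)
    (hzpos : ∀ s, 0 < z s)
    (hode : ∀ s, θd s = ((m - 1) * Real.cos (θ s) + n) / z s)
    (hx0 : x 0 = 0) (hz0 : z 0 = z₀) (hz₀ : 0 < z₀) (hθ0 : θ 0 = 0) :
    ∀ s, (n + Real.cos (θ s)) * z s =
      (2 - m) * (∫ t in (0 : ℝ)..s, Real.sin (θ t) * Real.cos (θ t)) +
        (n + 1) * z₀ := by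
  intro s
  have hθc : Continuous θ := continuous_iff_continuousAt.2 fun t => (hθ t).continuousAt
  have hg : ∀ t, HasDerivAt (fun u => (n + Real.cos (θ u)) * z u)
      ((2 - m) * (Real.sin (θ t) * Real.cos (θ t))) t := by
    intro t
    have h1 : HasDerivAt (fun u => n + Real.cos (θ u))
        (-Real.sin (θ t) * θd t) t :=
      (((Real.hasDerivAt_cos (θ t)).comp t (hθ t)).const_add n)
    have : HasDerivAt (fun u => (n + Real.cos (θ u)) * z u) _ t := h1.mul (hz t)
    convert this using 1
    have hzne : z t ≠ 0 := (hzpos t).ne'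
    rw [hode t]
    field_simp
    ring
  have hint : (∫ t in (0:ℝ)..s, (2 - m) * (Real.sin (θ t) * Real.cos (θ t)))
      = (n + Real.cos (θ s)) * z s - (n + Real.cos (θ 0)) * z 0 := by
    apply intervalIntegral.integral_eq_sub_of_hasDerivAt
    · intro t _; exact hg t
    · apply Continuous.intervalIntegrable
      fun_prop
  rw [intervalIntegral.integral_const_mul] at hint
  rw [hint, hθ0, hz0, Real.cos_zero]
  ring
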